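/- Fix a finite field F_q, a positive integer m, and a polynomial P in m variables with rational coefficients. For a monic polynomial f over F_q and j \geq 1, let m_j(f) denote the number of monic irreducible factors of f of degree j counted with multiplicity. Then the sequence of expected values E_d = q^{-d} \sum_{f monic, deg f = d} P(m_1(f), m_2(f), ..., m_m(f)) converges (as a sequence of rational numbers, in the real numbers) as d tends to infinity. -/

import Mathlib

open Polynomial

/-- `m_j(f)`: the number of irreducible factors of `f` of degree `j`, counted with
multiplicity. -/
noncomputable def factorCount {F : Type*} [Field F] (j : ℕ) (f : F[X]) : ℕ :=
  Multiset.count j ((UniqueFactorizationMonoid.factors f).map natDegree)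

namespace Statement14Aux

open Finset UniqueFactorizationMonoid Filter
open scoped Classical
set_option linter.unusedSectionVars false

variable {F : Type*} [Field F] [Fintype F] [DecidableEq F]

/-- The generic monic polynomial of degree `d` with prescribed lower coefficients. -/
noncomputable def phiF (d : ℕ) (c : Fin d → F) : F[X] :=
  X ^ d + ∑ i : Fin d, C (c i) * X ^ (i : ℕ)

lemma degree_sum_lt (d : ℕ) (c : Fin d → F) :
    (∑ i : Fin d, C (c i) * X ^ (i : ℕ)).degree < (d : WithBot ℕ) := by
  apply lt_of_le_of_lt (degree_sum_le _ _)
  rw [Finset.sup_lt_iff (by exact_mod_cast WithBot.bot_lt_coe d)]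
  intro i _
  exact lt_of_le_of_lt (degree_C_mul_X_pow_le _ _) (by exact_mod_cast i.2)

lemma phiF_monic (d : ℕ) (c : Fin d → F) : (phiF d c).Monic := by
  exact monic_X_pow_add (degree_sum_lt d c)

lemma phiF_natDegree (d : ℕ) (c : Fin d → F) : (phiF d c).natDegree = d := by
  have h : (phiF d c).degree = (d : WithBot ℕ) := by
    rw [phiF, degree_add_eq_left_of_degree_lt, degree_X_pow]
    rw [degree_X_pow]; exact degree_sum_lt d c
  exact natDegree_eq_of_degree_eq_some h

lemma phiF_coeff (d : ℕ) (c : Fin d → F) (i : ℕ) (h : i < d) :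
    (phiF d c).coeff i = c ⟨i, h⟩ := by
  rw [phiF, coeff_add, coeff_X_pow, if_neg (Nat.ne_of_lt h), finset_sum_coeff]
  rw [zero_add]
  have : ∀ j : Fin d, (C (c j) * X ^ (j : ℕ)).coeff i = if (⟨i, h⟩ : Fin d) = j then c j else 0 := by
    intro j
    rw [coeff_C_mul, coeff_X_pow]
    by_cases hij : (⟨i, h⟩ : Fin d) = j
    · subst hij; simp
    · rw [if_neg hij, if_neg, mul_zero]
      exact fun hc => hij (Fin.ext hc)
  rw [Finset.sum_congr rfl (fun j _ => this j), Finset.sum_ite_eq]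
  simp

lemma phiF_injective (d : ℕ) : Function.Injective (phiF (F := F) d) := by
  intro c₁ c₂ hcc
  funext i
  have := congrArg (fun f => Polynomial.coeff f (i : ℕ)) hcc
  simpa [phiF_coeff d _ (i : ℕ) i.2] using this

/-- The finset of monic polynomials of degree `d`. -/
noncomputable def Md (d : ℕ) : Finset F[X] := image (phiF d) univ

lemma mem_Md {d : ℕ} {f : F[X]} : f ∈ Md (F := F) d ↔ f.Monic ∧ f.natDegree = d := by
  constructor
  · intro hf
    obtain ⟨c, _, rfl⟩ := Finset.mem_image.mp hf
    exact ⟨phiF_monic d c, phiF_natDegree d c⟩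
  · rintro ⟨hmon, hdeg⟩
    refine Finset.mem_image.mpr ⟨fun i => f.coeff (i : ℕ), Finset.mem_univ _, ?_⟩
    apply Polynomial.ext
    intro n
    rcases lt_trichotomy n d with hn | hn | hn
    · rw [phiF_coeff d _ n hn]
    · subst hn; rw [← hdeg] at *
      rw [phiF, coeff_add, coeff_X_pow, if_pos rfl, finset_sum_coeff]
      have : ∀ j : Fin f.natDegree, (C (f.coeff (j : ℕ)) * X ^ (j : ℕ)).coeff f.natDegree = 0 := by
        intro j
        rw [coeff_C_mul, coeff_X_pow, if_neg (Nat.ne_of_gt j.2), mul_zero]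
      rw [Finset.sum_congr rfl (fun j _ => this j), Finset.sum_const_zero, add_zero]
      exact (hmon.coeff_natDegree).symm
    · have h1 : (phiF d fun i : Fin d => f.coeff (i : ℕ)).coeff n = 0 := by
        apply coeff_eq_zero_of_natDegree_lt
        rw [phiF_natDegree]; exact hn
      rw [h1, coeff_eq_zero_of_natDegree_lt (hdeg ▸ hn)]

lemma card_Md (d : ℕ) : (Md (F := F) d).card = Fintype.card F ^ d := by
  rw [Md, Finset.card_image_of_injective _ (phiF_injective d), Finset.card_univ,
    Fintype.card_fun, Fintype.card_fin]

lemma card_dvd_filter (g : F[X]) (hg : g.Monic) {d : ℕ} (hd : g.natDegree ≤ d) :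
    ((Md (F := F) d).filter (fun f => g ∣ f)).card
      = Fintype.card F ^ (d - g.natDegree) := by
  rw [← card_Md (F := F) (d - g.natDegree)]
  refine (Finset.card_bij (fun h _ => g * h) ?_ ?_ ?_).symm
  · intro h hh
    rw [mem_Md] at hh
    rw [Finset.mem_filter, mem_Md]
    refine ⟨⟨hg.mul hh.1, ?_⟩, Dvd.intro _ rfl⟩
    rw [hg.natDegree_mul hh.1, hh.2]
    omega
  · intro a _ b _ hab
    exact mul_left_cancel₀ hg.ne_zero hab
  · intro f hf
    rw [Finset.mem_filter, mem_Md] at hf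
    obtain ⟨⟨hmon, hdeg⟩, c, rfl⟩ := hf
    have hc : c.Monic := hg.of_mul_monic_left hmon
    refine ⟨c, ?_, rfl⟩
    rw [mem_Md]
    refine ⟨hc, ?_⟩
    rw [hg.natDegree_mul hc] at hdeg
    omega

lemma sum_ite_dvd (g : F[X]) (hg : g.Monic) (d : ℕ) :
    (∑ f ∈ Md (F := F) d, if g ∣ f then (1 : ℕ) else 0)
      = if g.natDegree ≤ d then Fintype.card F ^ (d - g.natDegree) else 0 := by
  have hsb : (∑ f ∈ Md (F := F) d, if g ∣ f then (1 : ℕ) else 0)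
      = ((Md (F := F) d).filter (fun f => g ∣ f)).card := by
    simp [Finset.sum_boole]
  by_cases h : g.natDegree ≤ d
  · rw [if_pos h, hsb, card_dvd_filter g hg h]
  · rw [if_neg h, hsb]
    rw [Finset.card_eq_zero, Finset.filter_eq_empty_iff]
    intro f hf hdvd
    rw [mem_Md] at hf
    exact h (hf.2 ▸ natDegree_le_of_dvd hdvd hf.1.ne_zero)

/-- The finset of monic irreducible polynomials of degree `j`. -/
noncomputable def Irr (j : ℕ) : Finset F[X] := (Md (F := F) j).filter (fun p => Irreducible p)

lemma factorCount_eq {f : F[X]} (hf : f.Monic) {d j : ℕ} (hd : f.natDegree = d)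
    (hj : 1 ≤ j) :
    factorCount j f
      = ∑ p ∈ Irr (F := F) j, ∑ k ∈ Icc 1 d, if p ^ k ∣ f then (1 : ℕ) else 0 := by
  have hf0 : f ≠ 0 := hf.ne_zero
  have hnd : ∀ p : F[X], (normalize p).natDegree = p.natDegree := fun p => by
    simp [natDegree, degree_normalize]
  have h1 : factorCount j f
      = Multiset.count j (Multiset.map natDegree (normalizedFactors f)) := by
    rw [factorCount, normalizedFactors, Multiset.map_map]
    simp only [Function.comp_def, hnd]
  set M := normalizedFactors f with hM
  rw [h1, Multiset.count_map]
  have hsub : (M.filter (fun p => j = p.natDegree)).toFinset ⊆ Irr (F := F) j := by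
    intro p hp
    rw [Multiset.mem_toFinset, Multiset.mem_filter] at hp
    obtain ⟨hpM, hpj⟩ := hp
    have hirr : Irreducible p := irreducible_of_normalized_factor p hpM
    have hnorm : normalize p = p := normalize_normalized_factor p hpM
    have hmon : p.Monic := by
      have := monic_normalize (p := p) hirr.ne_zero
      rwa [hnorm] at this
    rw [Irr, Finset.mem_filter, mem_Md]
    exact ⟨⟨hmon, hpj.symm⟩, hirr⟩
  have hcard : (M.filter (fun p => j = p.natDegree)).card
      = ∑ p ∈ Irr (F := F) j, (M.filter (fun p => j = p.natDegree)).count p := by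
    rw [← Multiset.toFinset_sum_count_eq]
    exact Finset.sum_subset hsub (fun p _ hp => by
      rw [Multiset.count_eq_zero]
      exact fun hmem => hp (Multiset.mem_toFinset.mpr hmem))
  rw [hcard]
  apply Finset.sum_congr rfl
  intro p hp
  have hp' := hp
  rw [Irr, Finset.mem_filter, mem_Md] at hp'
  obtain ⟨⟨hmon, hdeg⟩, hirr⟩ := hp'
  have hnorm : normalize p = p := hmon.normalize_eq_self
  rw [Multiset.count_filter, if_pos hdeg.symm]
  have hdvd : ∀ k : ℕ, p ^ k ∣ f ↔ k ≤ M.count p := by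
    intro k
    rw [pow_dvd_iff_le_emultiplicity, emultiplicity_eq_count_normalizedFactors hirr hf0, hnorm]
    exact_mod_cast Iff.rfl
  have hple : 1 ≤ p.natDegree := hirr.natDegree_pos
  have hle : M.count p ≤ d := by
    by_contra hgt
    push_neg at hgt
    have hdd : p ^ (d + 1) ∣ f := (hdvd _).mpr hgt
    have h2 := natDegree_le_of_dvd hdd hf0
    rw [natDegree_pow, hd] at h2
    have h3 : d + 1 ≤ (d + 1) * p.natDegree := Nat.le_mul_of_pos_right _ hple
    omega
  have : ∀ k ∈ Icc 1 d, (if p ^ k ∣ f then (1:ℕ) else 0) = (if k ≤ M.count p then (1:ℕ) else 0) :=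
    fun k _ => if_congr (hdvd k) rfl rfl
  rw [Finset.sum_congr rfl this]
  have hfil : (Icc 1 d).filter (fun k => k ≤ M.count p) = Icc 1 (M.count p) := by
    ext k
    simp only [Finset.mem_filter, Finset.mem_Icc]
    omega
  simp only [Finset.sum_boole, Nat.cast_id, hfil, Nat.card_Icc]
  omega

section Monomial

variable {m : ℕ} (u : Fin m → ℕ)

/-- Index of "slots" for the monomial `∏ x_i ^ u i`. -/
abbrev Idx (u : Fin m → ℕ) := (i : Fin m) × Fin (u i)

/-- Tuples of (irreducible, exponent) choices, one for each slot. -/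
noncomputable def TT (d : ℕ) : Finset (Idx u → F[X] × ℕ) :=
  Fintype.piFinset (fun s => (Irr (F := F) ((s.1 : ℕ) + 1)) ×ˢ Icc 1 d)

/-- The least common multiple of the chosen prime powers. -/
noncomputable def LL (τ : Idx u → F[X] × ℕ) : F[X] :=
  univ.lcm (fun s => (τ s).1 ^ (τ s).2)

lemma LL_facts {d : ℕ} {τ : Idx u → F[X] × ℕ} (hτ : τ ∈ TT (F := F) u d) :
    (LL u τ).Monic ∧ ∀ s : Idx u, (τ s).2 ≤ (LL u τ).natDegree := by
  have hmem : ∀ s : Idx u, (τ s).1 ∈ Irr (F := F) ((s.1 : ℕ) + 1) ∧ (τ s).2 ∈ Icc 1 d := by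
    intro s
    have h := Fintype.mem_piFinset.mp hτ s
    rwa [Finset.mem_product] at h
  have hprops : ∀ s : Idx u, ((τ s).1).Monic ∧ ((τ s).1).natDegree = (s.1 : ℕ) + 1
      ∧ Irreducible ((τ s).1) := by
    intro s
    have h1 := (hmem s).1
    rw [Irr, Finset.mem_filter, mem_Md] at h1
    exact ⟨h1.1.1, h1.1.2, h1.2⟩
  have hdvdprod : LL u τ ∣ ∏ s : Idx u, (τ s).1 ^ (τ s).2 :=
    Finset.lcm_dvd (fun s _ => Finset.dvd_prod_of_mem _ (Finset.mem_univ s))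
  have hprod0 : (∏ s : Idx u, (τ s).1 ^ (τ s).2) ≠ 0 :=
    Finset.prod_ne_zero_iff.mpr (fun s _ => pow_ne_zero _ (hprops s).1.ne_zero)
  have hL0 : LL u τ ≠ 0 := by
    intro h
    rw [h, zero_dvd_iff] at hdvdprod
    exact hprod0 hdvdprod
  have hmonL : (LL u τ).Monic := by
    have hn : normalize (LL u τ) = LL u τ := Finset.normalize_lcm
    have h := monic_normalize (p := LL u τ) hL0
    rwa [hn] at h
  refine ⟨hmonL, fun s => ?_⟩
  have hdvd : (τ s).1 ^ (τ s).2 ∣ LL u τ := Finset.dvd_lcm (Finset.mem_univ s)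
  have h2 := natDegree_le_of_dvd hdvd hL0
  rw [natDegree_pow, (hprops s).2.1] at h2
  have h3 : (τ s).2 ≤ (τ s).2 * ((s.1 : ℕ) + 1) := Nat.le_mul_of_pos_right _ (Nat.succ_pos _)
  omega

lemma A_eq (d : ℕ) :
    (∑ f ∈ Md (F := F) d, ∏ i : Fin m, factorCount ((i : ℕ) + 1) f ^ u i)
      = ∑ τ ∈ TT (F := F) u d,
          if (LL u τ).natDegree ≤ d then Fintype.card F ^ (d - (LL u τ).natDegree) else 0 := by
  have step : ∀ f ∈ Md (F := F) d,
      (∏ i : Fin m, factorCount ((i : ℕ) + 1) f ^ u i)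
        = ∑ τ ∈ TT (F := F) u d, if (LL u τ) ∣ f then (1 : ℕ) else 0 := by
    intro f hf
    rw [mem_Md] at hf
    have h1 : (∏ i : Fin m, factorCount ((i : ℕ) + 1) f ^ u i)
        = ∏ s : Idx u, factorCount ((s.1 : ℕ) + 1) f := by
      rw [← Finset.univ_sigma_univ, Finset.prod_sigma]
      simp [Finset.prod_const]
    have h2 : ∀ s : Idx u, factorCount ((s.1 : ℕ) + 1) f
        = ∑ c ∈ (Irr (F := F) ((s.1 : ℕ) + 1)) ×ˢ Icc 1 d,
            if c.1 ^ c.2 ∣ f then (1 : ℕ) else 0 := by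
      intro s
      rw [factorCount_eq hf.1 hf.2 (Nat.le_add_left 1 _), Finset.sum_product]
    rw [h1, Finset.prod_congr rfl (fun s _ => h2 s), Finset.prod_univ_sum]
    apply Finset.sum_congr rfl
    intro τ hτ
    rw [Fintype.prod_boole]
    apply if_congr _ rfl rfl
    unfold LL
    constructor
    · intro h
      exact Finset.lcm_dvd (fun s _ => h s)
    · intro h s
      exact dvd_trans (Finset.dvd_lcm (f := fun s => (τ s).1 ^ (τ s).2) (Finset.mem_univ s)) h
  rw [Finset.sum_congr rfl step, Finset.sum_comm]
  exact Finset.sum_congr rfl (fun τ hτ => sum_ite_dvd _ (LL_facts u hτ).1 d)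

lemma exists_lim_monomial :
    ∃ L : ℝ, Tendsto
      (fun d : ℕ =>
        ((∑ f ∈ Md (F := F) d, ∏ i : Fin m, factorCount ((i : ℕ) + 1) f ^ u i : ℕ) : ℝ) /
          (Fintype.card F : ℝ) ^ d)
      atTop (nhds L) := by
  have hq1 : 1 < Fintype.card F := Fintype.one_lt_card
  have hqR : (1:ℝ) < (Fintype.card F : ℝ) := by exact_mod_cast hq1
  have hqR0 : (0:ℝ) < (Fintype.card F : ℝ) := lt_trans one_pos hqR
  set a := Fintype.card (Idx u) with ha
  set r : ℝ := (Fintype.card F : ℝ) ^ (-(1/((a:ℝ)+1))) with hrdef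
  have hr0 : 0 < r := Real.rpow_pos_of_pos hqR0 _
  have hr1 : r < 1 := by
    apply Real.rpow_lt_one_of_one_lt_of_neg hqR
    have h : (0:ℝ) < 1/((a:ℝ)+1) := by positivity
    linarith
  set E : ℕ → ℝ := fun d => ∑ τ ∈ TT (F := F) u d,
    (if (LL u τ).natDegree ≤ d then ((Fintype.card F : ℝ) ^ (LL u τ).natDegree)⁻¹ else 0)
    with hE
  have hnn : ∀ (n d : ℕ), (0:ℝ) ≤ (if n ≤ d then ((Fintype.card F : ℝ) ^ n)⁻¹ else 0) := by
    intro n d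
    split
    · positivity
    · exact le_refl _
  have hEq : ∀ d : ℕ,
      ((∑ f ∈ Md (F := F) d, ∏ i : Fin m, factorCount ((i : ℕ) + 1) f ^ u i : ℕ) : ℝ)
        / (Fintype.card F : ℝ) ^ d = E d := by
    intro d
    rw [A_eq u d, hE]
    push_cast [apply_ite (Nat.cast : ℕ → ℝ)]
    rw [Finset.sum_div]
    apply Finset.sum_congr rfl
    intro τ _
    by_cases h : (LL u τ).natDegree ≤ d
    · rw [if_pos h, if_pos h]
      have h0 : ((Fintype.card F : ℝ)) ^ d ≠ 0 := by positivity
      have h0' : ((Fintype.card F : ℝ)) ^ (LL u τ).natDegree ≠ 0 := by positivity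
      rw [div_eq_iff h0, inv_mul_eq_div, eq_div_iff h0', ← pow_add]
      congr 1
      omega
    · rw [if_neg h, if_neg h, zero_div]
  have hmono : Monotone E := by
    intro d1 d2 hdd
    simp only [hE]
    have hsub : TT (F := F) u d1 ⊆ TT (F := F) u d2 :=
      Fintype.piFinset_subset _ _ (fun s =>
        Finset.product_subset_product (Finset.Subset.refl _) (Finset.Icc_subset_Icc_right hdd))
    calc (∑ τ ∈ TT (F := F) u d1,
            if (LL u τ).natDegree ≤ d1 then ((Fintype.card F : ℝ) ^ (LL u τ).natDegree)⁻¹ else 0)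
        ≤ ∑ τ ∈ TT (F := F) u d1,
            if (LL u τ).natDegree ≤ d2 then ((Fintype.card F : ℝ) ^ (LL u τ).natDegree)⁻¹ else 0 := by
          apply Finset.sum_le_sum
          intro τ _
          by_cases h : (LL u τ).natDegree ≤ d1
          · rw [if_pos h, if_pos (le_trans h hdd)]
          · rw [if_neg h]
            exact hnn _ _
      _ ≤ _ := Finset.sum_le_sum_of_subset_of_nonneg hsub (fun τ _ _ => hnn _ _)
  set B : ℝ := ∏ s : Idx u, (((Irr (F := F) ((s.1 : ℕ) + 1)).card : ℝ) * (1 - r)⁻¹) with hB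
  have hgeom : ∀ d : ℕ, (∑ k ∈ Icc 1 d, r ^ k) ≤ (1 - r)⁻¹ :=
    fun d => sum_le_hasSum _ (fun k _ => pow_nonneg hr0.le k)
      (hasSum_geometric_of_lt_one hr0.le hr1)
  have hbound : ∀ d : ℕ, E d ≤ B := by
    intro d
    simp only [hE]
    have step1 : ∀ τ ∈ TT (F := F) u d,
        (if (LL u τ).natDegree ≤ d then ((Fintype.card F : ℝ) ^ (LL u τ).natDegree)⁻¹ else 0)
          ≤ ∏ s : Idx u, r ^ (τ s).2 := by
      intro τ hτ
      have hmain : ((Fintype.card F : ℝ) ^ (LL u τ).natDegree)⁻¹ ≤ ∏ s : Idx u, r ^ (τ s).2 := by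
        set n := (LL u τ).natDegree with hn
        have hsumk : (∑ s : Idx u, (τ s).2) ≤ (a + 1) * n := by
          have h1 : (∑ s : Idx u, (τ s).2) ≤ a * n := by
            have h2 := Finset.sum_le_card_nsmul Finset.univ (fun s => (τ s).2) n
              (fun s _ => (LL_facts u hτ).2 s)
            simpa [ha, smul_eq_mul] using h2
          have h3 : a * n ≤ (a + 1) * n := Nat.mul_le_mul_right n (Nat.le_succ a)
          omega
        have hpow : ((Fintype.card F : ℝ) ^ n)⁻¹ = r ^ ((a + 1) * n) := by
          rw [hrdef, ← Real.rpow_natCast ((Fintype.card F : ℝ) ^ (-(1/((a:ℝ)+1)))) ((a+1)*n),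
            ← Real.rpow_mul hqR0.le, ← Real.rpow_natCast (Fintype.card F : ℝ) n,
            ← Real.rpow_neg hqR0.le]
          congr 1
          have hne : ((a:ℝ) + 1) ≠ 0 := by positivity
          push_cast
          field_simp
        rw [hpow, Finset.prod_pow_eq_pow_sum]
        exact pow_le_pow_of_le_one hr0.le hr1.le hsumk
      by_cases h : (LL u τ).natDegree ≤ d
      · rw [if_pos h]
        exact hmain
      · rw [if_neg h]
        exact Finset.prod_nonneg (fun s _ => pow_nonneg hr0.le _)
    calc (∑ τ ∈ TT (F := F) u d,
            if (LL u τ).natDegree ≤ d then ((Fintype.card F : ℝ) ^ (LL u τ).natDegree)⁻¹ else 0)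
        ≤ ∑ τ ∈ TT (F := F) u d, ∏ s : Idx u, r ^ (τ s).2 := Finset.sum_le_sum step1
      _ = ∏ s : Idx u, ∑ c ∈ (Irr (F := F) ((s.1 : ℕ) + 1)) ×ˢ Icc 1 d, r ^ c.2 := by
          rw [TT]
          exact (Finset.prod_univ_sum (fun s : Idx u => (Irr (F := F) ((s.1 : ℕ) + 1)) ×ˢ Icc 1 d)
            (fun s c => r ^ c.2)).symm
      _ ≤ B := by
          rw [hB]
          apply Finset.prod_le_prod
          · intro s _
            exact Finset.sum_nonneg (fun c _ => pow_nonneg hr0.le _)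
          · intro s _
            calc (∑ c ∈ (Irr (F := F) ((s.1 : ℕ) + 1)) ×ˢ Icc 1 d, r ^ c.2)
                = ∑ _x ∈ Irr (F := F) ((s.1 : ℕ) + 1), ∑ k ∈ Icc 1 d, r ^ k := by
                  rw [Finset.sum_product]
              _ = ((Irr (F := F) ((s.1 : ℕ) + 1)).card : ℝ) * ∑ k ∈ Icc 1 d, r ^ k := by
                  rw [Finset.sum_const, nsmul_eq_mul]
              _ ≤ _ := mul_le_mul_of_nonneg_left (hgeom d) (by positivity)
  have hbdd : BddAbove (Set.range E) := ⟨B, by rintro x ⟨d, rfl⟩; exact hbound d⟩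
  refine ⟨⨆ d, E d, ?_⟩
  have ht := tendsto_atTop_ciSup hmono hbdd
  rw [show (fun d : ℕ =>
      ((∑ f ∈ Md (F := F) d, ∏ i : Fin m, factorCount ((i : ℕ) + 1) f ^ u i : ℕ) : ℝ) /
        (Fintype.card F : ℝ) ^ d) = E from funext hEq]
  exact ht

end Monomial

end Statement14Aux

/-- For a fixed finite field `F_q` and a character polynomial
`P ∈ ℚ[x₁, …, x_m]`, the expected values
`E_d = q^{-d} ∑_{f monic, deg f = d} P(m₁(f), …, m_m(f))` converge as `d → ∞`. -/
theorem statement14 (F : Type*) [Field F] [Fintype F] (m : ℕ) (hm : 0 < m)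
    (P : MvPolynomial (Fin m) ℚ) :
    ∃ L : ℝ, Filter.Tendsto
      (fun d : ℕ =>
        ((∑ᶠ f ∈ {f : F[X] | f.Monic ∧ f.natDegree = d},
            MvPolynomial.eval (fun i : Fin m => (factorCount ((i : ℕ) + 1) f : ℚ)) P : ℚ) : ℝ) /
          (Fintype.card F : ℝ) ^ d)
      Filter.atTop (nhds L) := by
  classical
  open Statement14Aux in
  have hset : ∀ d : ℕ,
      {f : F[X] | f.Monic ∧ f.natDegree = d} = ↑(Md (F := F) d) := by
    intro d
    ext f
    simp [Statement14Aux.mem_Md]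
  have hfin : ∀ (d : ℕ) (g : F[X] → ℚ),
      (∑ᶠ f ∈ {f : F[X] | f.Monic ∧ f.natDegree = d}, g f)
        = ∑ f ∈ Statement14Aux.Md (F := F) d, g f := by
    intro d g
    rw [hset d, finsum_mem_coe_finset]
  induction P using MvPolynomial.induction_on' with
  | monomial v c =>
    obtain ⟨L, hL⟩ := Statement14Aux.exists_lim_monomial (F := F) (fun i : Fin m => v i)
    refine ⟨(c : ℝ) * L, ?_⟩
    have key : ∀ d : ℕ,
        ((∑ᶠ f ∈ {f : F[X] | f.Monic ∧ f.natDegree = d},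
            MvPolynomial.eval (fun i : Fin m => (factorCount ((i : ℕ) + 1) f : ℚ))
              (MvPolynomial.monomial v c) : ℚ) : ℝ) / (Fintype.card F : ℝ) ^ d
          = (c : ℝ) *
            (((∑ f ∈ Statement14Aux.Md (F := F) d,
                ∏ i : Fin m, factorCount ((i : ℕ) + 1) f ^ v i : ℕ) : ℝ) /
              (Fintype.card F : ℝ) ^ d) := by
      intro d
      rw [hfin d _]
      have heval : ∀ f : F[X],
          MvPolynomial.eval (fun i : Fin m => (factorCount ((i : ℕ) + 1) f : ℚ))
              (MvPolynomial.monomial v c)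
            = c * ∏ i : Fin m, (factorCount ((i : ℕ) + 1) f : ℚ) ^ v i := by
        intro f
        rw [MvPolynomial.eval_monomial]
        congr 1
        exact Finsupp.prod_fintype _ _ (fun i => pow_zero _)
      rw [Finset.sum_congr rfl (fun f _ => heval f), ← Finset.mul_sum]
      push_cast
      ring
    rw [show (fun d : ℕ =>
        ((∑ᶠ f ∈ {f : F[X] | f.Monic ∧ f.natDegree = d},
            MvPolynomial.eval (fun i : Fin m => (factorCount ((i : ℕ) + 1) f : ℚ))
              (MvPolynomial.monomial v c) : ℚ) : ℝ) / (Fintype.card F : ℝ) ^ d)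
      = fun d : ℕ => (c : ℝ) *
            (((∑ f ∈ Statement14Aux.Md (F := F) d,
                ∏ i : Fin m, factorCount ((i : ℕ) + 1) f ^ v i : ℕ) : ℝ) /
              (Fintype.card F : ℝ) ^ d) from funext key]
    exact hL.const_mul (c : ℝ)
  | add p q hp hq =>
    obtain ⟨L1, h1⟩ := hp
    obtain ⟨L2, h2⟩ := hq
    refine ⟨L1 + L2, ?_⟩
    have key : ∀ d : ℕ,
        ((∑ᶠ f ∈ {f : F[X] | f.Monic ∧ f.natDegree = d},
            MvPolynomial.eval (fun i : Fin m => (factorCount ((i : ℕ) + 1) f : ℚ))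
              (p + q) : ℚ) : ℝ) / (Fintype.card F : ℝ) ^ d
          = ((∑ᶠ f ∈ {f : F[X] | f.Monic ∧ f.natDegree = d},
              MvPolynomial.eval (fun i : Fin m => (factorCount ((i : ℕ) + 1) f : ℚ)) p : ℚ) : ℝ)
              / (Fintype.card F : ℝ) ^ d
            + ((∑ᶠ f ∈ {f : F[X] | f.Monic ∧ f.natDegree = d},
              MvPolynomial.eval (fun i : Fin m => (factorCount ((i : ℕ) + 1) f : ℚ)) q : ℚ) : ℝ)
              / (Fintype.card F : ℝ) ^ d := by
      intro d
      rw [hfin d _, hfin d _, hfin d _]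
      rw [show (∑ f ∈ Statement14Aux.Md (F := F) d,
          MvPolynomial.eval (fun i : Fin m => (factorCount ((i : ℕ) + 1) f : ℚ)) (p + q))
        = (∑ f ∈ Statement14Aux.Md (F := F) d,
            MvPolynomial.eval (fun i : Fin m => (factorCount ((i : ℕ) + 1) f : ℚ)) p)
          + ∑ f ∈ Statement14Aux.Md (F := F) d,
              MvPolynomial.eval (fun i : Fin m => (factorCount ((i : ℕ) + 1) f : ℚ)) q from by
        rw [← Finset.sum_add_distrib]
        exact Finset.sum_congr rfl (fun f _ => by rw [MvPolynomial.eval_add])]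
      push_cast
      rw [add_div]
    rw [funext key]
    exact h1.add h2
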